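/- arXiv:2008.03538 — 6 statements merged into one kernel-verified Lean document; each statement's English description precedes it below -/
import Mathlib

section
/- Let L be a reflective subuniverse of types and f : A → B a map. The following are equivalent: (i) f is an L-equivalence; (ii) for every L-local type X, precomposition with f is a bijection (B → X) → (A → X); (iii) f is left orthogonal to every map between L-local types; (iv) f is left orthogonal to every L-étale map. In particular, the class of L-equivalences equals the class of maps left orthogonal to every L-étale map. -/
universe u

/-- A reflective subuniverse of `Type u`: a predicate `IsLocal` on types, an
operation `L`, and unit maps `unit X : X → L X`, such that `L X` is local and
precomposition with the unit is a bijection into maps to any local type. -/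
structure ReflSub : Type (u + 1) where
  IsLocal : Type u → Prop
  L : Type u → Type u
  unit : ∀ X : Type u, X → L X
  local_L : ∀ X : Type u, IsLocal (L X)
  univ : ∀ (X Z : Type u), IsLocal Z →
    Function.Bijective (fun g : L X → Z => g ∘ unit X)

/-- The functorial action `L f : L A → L B`, the unique map with
`L f ∘ η_A = η_B ∘ f`. -/
noncomputable def ReflSub.map (R : ReflSub.{u}) {A B : Type u} (f : A → B) :
    R.L A → R.L B :=
  Function.surjInv (R.univ A (R.L B) (R.local_L B)).2 (R.unit B ∘ f)

/-- `f` is an `L`-equivalence if `L f` is a bijection. -/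
def ReflSub.IsEquiv (R : ReflSub.{u}) {A B : Type u} (f : A → B) : Prop :=
  Function.Bijective (R.map f)

/-- `f : A → B` is left orthogonal to `g : X → Y` (equivalently, `g` is right
orthogonal to `f`) if every commuting square from `f` to `g` admits a unique
diagonal filler. -/
def LeftOrth {A B X Y : Type u} (f : A → B) (g : X → Y) : Prop :=
  ∀ (u : A → X) (v : B → Y), g ∘ u = v ∘ f →
    ∃! d : B → X, d ∘ f = u ∧ g ∘ d = v

/-- The square with projections `pa : P → A`, `pb : P → B` over the cospan
`f : A → C`, `g : B → C` commutes and is a pullback square: the induced map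
`P → A ×_C B` is a bijection. -/
def IsPullbackSq {P A B C : Type u} (pa : P → A) (pb : P → B)
    (f : A → C) (g : B → C) : Prop :=
  (∀ p, f (pa p) = g (pb p)) ∧
    ∀ (a : A) (b : B), f a = g b → ∃! p : P, pa p = a ∧ pb p = b

/-- `f : A → B` is `L`-étale if its `L`-naturality square is a pullback square,
i.e. the induced map `A → B ×_{L B} L A` is a bijection. -/
def ReflSub.IsEtale (R : ReflSub.{u}) {A B : Type u} (f : A → B) : Prop :=
  IsPullbackSq f (R.unit A) (R.unit B) (R.map f)

/-- A map is `L`-local if each of its fibers is an `L`-local type. -/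
def ReflSub.IsLocalMap (R : ReflSub.{u}) {X Y : Type u} (g : X → Y) : Prop :=
  ∀ y : Y, R.IsLocal {x : X // g x = y}

/-- A map is `L`-connected if `L` of each of its fibers has exactly one
element. -/
def ReflSub.IsConnMap (R : ReflSub.{u}) {X Y : Type u} (g : X → Y) : Prop :=
  ∀ y : Y, ∃ z : R.L {x : X // g x = y}, ∀ w : R.L {x : X // g x = y}, w = z

/-- `L` is a modality if the `L`-local types are closed under dependent sums. -/
def ReflSub.IsModality (R : ReflSub.{u}) : Prop :=
  ∀ (X : Type u) (P : X → Type u), R.IsLocal X → (∀ x, R.IsLocal (P x)) →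
    R.IsLocal (Σ x, P x)

/-- `L` is lex if applying `L` to any pullback square yields a pullback
square. -/
def ReflSub.IsLex (R : ReflSub.{u}) : Prop :=
  ∀ (E' E B' B : Type u) (p' : E' → B') (g : E' → E) (f : B' → B) (p : E → B),
    IsPullbackSq p' g f p →
    IsPullbackSq (R.map p') (R.map g) (R.map f) (R.map p)

section Aux
variable (R : ReflSub.{u})

lemma ReflSub.map_unit {A B : Type u} (f : A → B) :
    R.map f ∘ R.unit A = R.unit B ∘ f :=
  Function.surjInv_eq (R.univ A (R.L B) (R.local_L B)).2 (R.unit B ∘ f)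

lemma ReflSub.unit_bij {X : Type u} (hX : R.IsLocal X) :
    Function.Bijective (R.unit X) := by
  obtain ⟨r, hr0⟩ := (R.univ X X hX).2 id
  have hr : r ∘ R.unit X = id := hr0
  have h2 : R.unit X ∘ r = id := by
    apply (R.univ X (R.L X) (R.local_L X)).1
    show (R.unit X ∘ r) ∘ R.unit X = id ∘ R.unit X
    simp only [Function.comp_assoc, hr]; rfl
  exact ⟨Function.LeftInverse.injective (congrFun hr),
    Function.RightInverse.surjective (congrFun h2)⟩

lemma ReflSub.Lpunit_eq (z : R.L PUnit) : z = R.unit PUnit PUnit.unit := by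
  have key : (id : R.L PUnit → R.L PUnit) =
      (fun _ => R.unit PUnit PUnit.unit) := by
    apply (R.univ PUnit (R.L PUnit) (R.local_L PUnit)).1
    funext x; rfl
  exact congrFun key z

/-- Terminal maps out of local types are étale. -/
lemma ReflSub.etale_terminal {X : Type u} (hX : R.IsLocal X) :
    R.IsEtale (fun _ : X => PUnit.unit) := by
  constructor
  · intro p
    rw [R.Lpunit_eq (R.map _ (R.unit X p))]
  · intro a la _
    obtain ⟨x, hx⟩ := (R.unit_bij hX).2 la
    refine ⟨x, ⟨Subsingleton.elim _ _, hx⟩, ?_⟩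
    rintro y ⟨-, hy⟩
    exact (R.unit_bij hX).1 (hy.trans hx.symm)

end Aux


/-- Characterization of `L`-equivalences (Prop. 2.1 / i₁): `f` is an
`L`-equivalence iff precomposition into local types is a bijection, iff `f` is
left orthogonal to every map between local types, iff `f` is left orthogonal
to every `L`-étale map.  In particular the `L`-equivalences are exactly the
maps left orthogonal to all `L`-étale maps. -/
theorem stmt_0 (R : ReflSub.{u}) (A B : Type u) (f : A → B) :
    List.TFAE [
      R.IsEquiv f,
      ∀ X : Type u, R.IsLocal X → Function.Bijective (fun h : B → X => h ∘ f),
      ∀ (X Y : Type u) (g : X → Y), R.IsLocal X → R.IsLocal Y → LeftOrth f g,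
      ∀ (X Y : Type u) (g : X → Y), R.IsEtale g → LeftOrth f g] := by
  tfae_have 1 → 2 := by
    intro hf X hX
    constructor
    · intro h1 h2 hh
      replace hh : h1 ∘ f = h2 ∘ f := hh
      obtain ⟨g1, hg1⟩ := (R.univ B X hX).2 h1
      obtain ⟨g2, hg2⟩ := (R.univ B X hX).2 h2
      replace hg1 : g1 ∘ R.unit B = h1 := hg1
      replace hg2 : g2 ∘ R.unit B = h2 := hg2
      have key : g1 ∘ R.map f = g2 ∘ R.map f := by
        apply (R.univ A X hX).1
        show (g1 ∘ R.map f) ∘ R.unit A = (g2 ∘ R.map f) ∘ R.unit A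
        rw [Function.comp_assoc, Function.comp_assoc, R.map_unit,
          ← Function.comp_assoc, ← Function.comp_assoc, hg1, hg2, hh]
      have hgg : g1 = g2 := by
        funext z
        obtain ⟨w, hw⟩ := hf.2 z
        rw [← hw]; exact congrFun key w
      rw [← hg1, ← hg2, hgg]
    · intro u
      obtain ⟨w, hw0⟩ := (R.univ A X hX).2 u
      have hw : w ∘ R.unit A = u := hw0
      refine ⟨w ∘ Function.surjInv hf.2 ∘ R.unit B, ?_⟩
      show (w ∘ Function.surjInv hf.2 ∘ R.unit B) ∘ f = u
      funext a
      have h1 : R.unit B (f a) = R.map f (R.unit A a) :=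
        (congrFun (R.map_unit f) a).symm
      simp only [Function.comp_apply, h1,
        Function.leftInverse_surjInv hf (R.unit A a)]
      exact congrFun hw a
  tfae_have 2 → 1 := by
    intro h2
    obtain ⟨h, hh0⟩ := (h2 (R.L A) (R.local_L A)).2 (R.unit A)
    obtain ⟨g, hg0⟩ := (R.univ B (R.L A) (R.local_L A)).2 h
    have hh : h ∘ f = R.unit A := hh0
    have hg : g ∘ R.unit B = h := hg0
    have left : g ∘ R.map f = id := by
      apply (R.univ A (R.L A) (R.local_L A)).1
      show (g ∘ R.map f) ∘ R.unit A = id ∘ R.unit A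
      rw [Function.comp_assoc, R.map_unit, ← Function.comp_assoc, hg, hh]
      rfl
    have mid : R.map f ∘ h = R.unit B := by
      apply (h2 (R.L B) (R.local_L B)).1
      show (R.map f ∘ h) ∘ f = R.unit B ∘ f
      rw [Function.comp_assoc, hh, R.map_unit]
    have right : R.map f ∘ g = id := by
      apply (R.univ B (R.L B) (R.local_L B)).1
      show (R.map f ∘ g) ∘ R.unit B = id ∘ R.unit B
      rw [Function.comp_assoc, hg, mid]; rfl
    exact ⟨Function.LeftInverse.injective (congrFun left),
      Function.RightInverse.surjective (congrFun right)⟩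
  tfae_have 2 → 3 := by
    intro h2 X Y g hX hY u v hsq
    obtain ⟨d, hd0⟩ := (h2 X hX).2 u
    have hd : d ∘ f = u := hd0
    refine ⟨d, ⟨hd, ?_⟩, ?_⟩
    · apply (h2 Y hY).1
      show (g ∘ d) ∘ f = v ∘ f
      rw [Function.comp_assoc, hd, hsq]
    · rintro e ⟨he, -⟩
      exact (h2 X hX).1 (show e ∘ f = d ∘ f from he.trans hd.symm)
  tfae_have 3 → 4 := by
    intro h3 X Y g hg u v hsq
    have hsq2 : R.map g ∘ (R.unit X ∘ u) = (R.unit Y ∘ v) ∘ f := by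
      rw [← Function.comp_assoc, R.map_unit, Function.comp_assoc, hsq,
        Function.comp_assoc]
    obtain ⟨d2, ⟨hd21, hd22⟩, hd2u⟩ :=
      h3 (R.L X) (R.L Y) (R.map g) (R.local_L X) (R.local_L Y)
        (R.unit X ∘ u) (R.unit Y ∘ v) hsq2
    have hpb : ∀ b : B, ∃! x : X, g x = v b ∧ R.unit X x = d2 b := by
      intro b
      exact hg.2 (v b) (d2 b) (congrFun hd22.symm b)
    choose d hd hdu using hpb
    refine ⟨d, ⟨?_, ?_⟩, ?_⟩
    · funext a
      refine (hdu (f a) (u a) ⟨?_, ?_⟩).symm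
      · exact congrFun hsq a
      · exact (congrFun hd21 a).symm
    · funext b; exact (hd b).1
    · rintro e ⟨he1, he2⟩
      have hue : R.unit X ∘ e = d2 := by
        apply hd2u
        constructor
        · rw [Function.comp_assoc, he1]
        · rw [← Function.comp_assoc, R.map_unit, Function.comp_assoc, he2]
      funext b
      exact hdu b (e b) ⟨congrFun he2 b, congrFun hue b⟩
  tfae_have 4 → 2 := by
    intro h4 X hX
    have horth := h4 X PUnit (fun _ => PUnit.unit) (R.etale_terminal hX)
    constructor
    · intro h1 h2 hh
      replace hh : h1 ∘ f = h2 ∘ f := hh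
      obtain ⟨d, -, hdu⟩ := horth (h1 ∘ f) (fun _ => PUnit.unit) rfl
      have e1 : h1 = d := hdu h1 ⟨rfl, rfl⟩
      have e2 : h2 = d := hdu h2 ⟨hh.symm, rfl⟩
      exact e1.trans e2.symm
    · intro u
      obtain ⟨d, ⟨hd, -⟩, -⟩ := horth u (fun _ => PUnit.unit) rfl
      exact ⟨d, hd⟩
  tfae_finish
end

section
/- Let L be a reflective subuniverse of types presented by a family of maps {f_i : A_i → B_i}. Then every unit map η_X : X → L X is left orthogonal to every map that is right orthogonal to all the maps f_i; that is, the units lie in ⊥({f_i}^⊥). -/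
universe u

/-- If `L` is presented by a family of maps `f i : A i → B i`, then every unit
`η_X : X → L X` is left orthogonal to every map that is right orthogonal to
all the maps `f i`; that is, the units lie in `⊥({f i}^⊥)`. -/
theorem stmt_5 (R : ReflSub.{u}) (I : Type u) (A B : I → Type u)
    (f : ∀ i, A i → B i)
    (hpres : ∀ X : Type u, R.IsLocal X ↔
      ∀ i, Function.Bijective (fun h : B i → X => h ∘ f i)) :
    ∀ (X Y Z : Type u) (g : Y → Z),
      (∀ i, LeftOrth (f i) g) → LeftOrth (R.unit X) g := by
  intro X Y Z g hg u v hcomm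
  -- the pullback of g along v
  let W : Type u := {p : R.L X × Y // v p.1 = g p.2}
  -- W is L-local
  have hWloc : R.IsLocal W := by
    rw [hpres]
    intro i
    have hLX : Function.Bijective (fun h : B i → R.L X => h ∘ f i) :=
      (hpres (R.L X)).1 (R.local_L X) i
    constructor
    · -- injectivity of precomposition
      intro h1 h2 hh
      have hfst : (fun b => (h1 b).1.1) = fun b => (h2 b).1.1 := by
        apply hLX.1
        funext a
        exact congrArg (fun p : W => p.1.1) (congrFun hh a)
      have hsq : g ∘ (fun a => (h1 (f i a)).1.2) =
          (v ∘ fun b => (h1 b).1.1) ∘ f i := by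
        funext a
        exact ((h1 (f i a)).2).symm
      obtain ⟨d, hd, hdu⟩ := hg i (fun a => (h1 (f i a)).1.2)
        (v ∘ fun b => (h1 b).1.1) hsq
      have e1 : (fun b => (h1 b).1.2) = d := by
        apply hdu
        refine ⟨rfl, ?_⟩
        funext b
        exact ((h1 b).2).symm
      have e2 : (fun b => (h2 b).1.2) = d := by
        apply hdu
        constructor
        · funext a
          exact congrArg (fun p : W => p.1.2) (congrFun hh a).symm
        · funext b
          have : v (h2 b).1.1 = g (h2 b).1.2 := (h2 b).2
          have hb : (h1 b).1.1 = (h2 b).1.1 := congrFun hfst b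
          simp only [Function.comp]
          rw [hb]
          exact this.symm
      funext b
      apply Subtype.ext
      apply Prod.ext
      · exact congrFun hfst b
      · exact congrFun (e1.trans e2.symm) b
    · -- surjectivity of precomposition
      intro a'
      obtain ⟨bL, hbL⟩ := hLX.2 (fun a => (a' a).1.1)
      have hsq : g ∘ (fun a => (a' a).1.2) = (v ∘ bL) ∘ f i := by
        funext a
        have h1 : v ((a' a).1.1) = g ((a' a).1.2) := (a' a).2
        have h2 : bL (f i a) = (a' a).1.1 := congrFun hbL a
        simp only [Function.comp]
        rw [h2]
        exact h1.symm
      obtain ⟨d, ⟨hd1, hd2⟩, _⟩ := hg i (fun a => (a' a).1.2) (v ∘ bL) hsq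
      refine ⟨fun b => ⟨(bL b, d b), (congrFun hd2 b).symm⟩, ?_⟩
      funext a
      apply Subtype.ext
      apply Prod.ext
      · exact congrFun hbL a
      · exact congrFun hd1 a
  -- factor the map X → W through the unit
  have hbij := R.univ X W hWloc
  obtain ⟨w, hw⟩ := hbij.2 (fun x => ⟨(R.unit X x, u x), (congrFun hcomm x).symm⟩)
  have hwfst : (fun l => (w l).1.1) = id := by
    apply (R.univ X (R.L X) (R.local_L X)).1
    funext x
    exact congrArg (fun p : W => p.1.1) (congrFun hw x)
  refine ⟨fun l => (w l).1.2, ⟨?_, ?_⟩, ?_⟩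
  · funext x
    exact congrArg (fun p : W => p.1.2) (congrFun hw x)
  · funext l
    have h1 : v ((w l).1.1) = g ((w l).1.2) := (w l).2
    have h2 : (w l).1.1 = l := congrFun hwfst l
    simp only [Function.comp]
    rw [← h1, h2]
  · intro d' ⟨hd'1, hd'2⟩
    let w' : R.L X → W := fun l => ⟨(l, d' l), (congrFun hd'2 l).symm⟩
    have hw' : w' = w := by
      apply hbij.1
      funext x
      apply Subtype.ext
      apply Prod.ext
      · exact (congrArg (fun p : W => p.1.1) (congrFun hw x)).symm
      · exact (congrFun hd'1 x).trans
          (congrArg (fun p : W => p.1.2) (congrFun hw x)).symm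
    funext l
    exact congrArg (fun p : W => p.1.2) (congrFun hw' l)
end

section
/- Let L be a reflective subuniverse of types all of whose unit maps η_X : X → L X are surjective. Consider a commuting square with top map g : E' → E, bottom map f : B' → B, left map p' : E' → B', and right map p : E → B, in which p and p' are L-étale and f is an L-equivalence. Then the square is a pullback square if and only if g is an L-equivalence. -/
universe u

/-- Suppose all unit maps of `L` are surjective.  For a commuting square with
top `g : E' → E`, bottom `f : B' → B`, left `p' : E' → B'`, right `p : E → B`,
in which `p` and `p'` are `L`-étale and `f` is an `L`-equivalence: the square
is a pullback square iff `g` is an `L`-equivalence. -/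
theorem stmt_8 (R : ReflSub.{u})
    (hsurj : ∀ X : Type u, Function.Surjective (R.unit X))
    (E' E B' B : Type u) (g : E' → E) (f : B' → B) (p' : E' → B') (p : E → B)
    (hcomm : ∀ e' : E', f (p' e') = p (g e'))
    (hp : R.IsEtale p) (hp' : R.IsEtale p') (hf : R.IsEquiv f) :
    IsPullbackSq p' g f p ↔ R.IsEquiv g := by
  have nat : ∀ {A B : Type u} (h : A → B) (a : A),
      R.map h (R.unit A a) = R.unit B (h a) := fun {A B} h a =>
    congrFun (Function.surjInv_eq (R.univ A (R.L B) (R.local_L B)).2 (R.unit B ∘ h)) a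
  -- functoriality on the square: L f ∘ L p' = L p ∘ L g
  have sq : ∀ x : R.L E', R.map f (R.map p' x) = R.map p (R.map g x) := by
    intro x
    obtain ⟨e', rfl⟩ := hsurj E' x
    rw [nat, nat, nat, nat, hcomm]
  constructor
  · intro hpb
    constructor
    · -- injectivity of L g
      intro x1 x2 hx
      obtain ⟨e1, rfl⟩ := hsurj E' x1
      obtain ⟨e2, rfl⟩ := hsurj E' x2
      rw [nat, nat] at hx
      have hb' : R.unit B' (p' e1) = R.unit B' (p' e2) := by
        apply hf.1
        rw [nat, nat, hcomm, hcomm, ← nat p, ← nat p, hx]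
      obtain ⟨e'', ⟨he1, he2⟩, _⟩ := hp'.2 (p' e1) (R.unit E' e2)
        (by rw [nat, ← hb'])
      have hge : g e'' = g e1 := by
        obtain ⟨w, _, huniq⟩ := hp.2 (p (g e1)) (R.unit E (g e1)) (nat p (g e1)).symm
        have h1 := huniq (g e1) ⟨rfl, rfl⟩
        have h2 := huniq (g e'') ⟨by rw [← hcomm, ← hcomm, he1],
          by rw [← nat, he2, nat, hx]⟩
        rw [h2, h1]
      have heq : e'' = e1 :=
        (hpb.2 (p' e1) (g e1) (hcomm e1)).unique ⟨he1, hge⟩ ⟨rfl, rfl⟩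
      rw [← heq, he2]
    · -- surjectivity of L g
      intro y
      obtain ⟨e, rfl⟩ := hsurj E y
      obtain ⟨lb', hlb'⟩ := hf.2 (R.unit B (p e))
      obtain ⟨b', rfl⟩ := hsurj B' lb'
      rw [nat] at hlb'
      obtain ⟨ehat, ⟨hehat1, hehat2⟩, _⟩ := hp.2 (f b') (R.unit E e)
        (by rw [nat, hlb'])
      obtain ⟨e', ⟨he'1, he'2⟩, _⟩ := hpb.2 b' ehat hehat1.symm
      exact ⟨R.unit E' e', by rw [nat, he'2, hehat2]⟩
  · intro hg
    refine ⟨hcomm, ?_⟩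
    intro b' e hfe
    obtain ⟨l, hl⟩ := hg.2 (R.unit E e)
    have hbl : R.unit B' b' = R.map p' l := by
      apply hf.1
      rw [nat, sq, hl, nat, hfe]
    obtain ⟨e', ⟨he'1, he'2⟩, huniq'⟩ := hp'.2 b' l hbl
    have hge' : g e' = e := by
      obtain ⟨w, _, huniq⟩ := hp.2 (p e) (R.unit E e) (nat p e).symm
      have h1 := huniq e ⟨rfl, rfl⟩
      have h2 := huniq (g e') ⟨by rw [← hcomm, he'1, hfe],
        by rw [← nat, he'2, hl]⟩
      rw [h2, h1]
    refine ⟨e', ⟨he'1, hge'⟩, ?_⟩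
    intro e'' ⟨h1, h2⟩
    refine huniq' e'' ⟨h1, ?_⟩
    apply hg.1
    rw [nat, h2, hl]
end

section
/- Let L be a reflective subuniverse of types that is a modality. Then a map is L-étale if and only if it is right orthogonal to every L-equivalence. -/
universe u

section Aux

theorem ReflSub.unit_natural (R : ReflSub.{u}) {A B : Type u} (f : A → B) (a : A) :
    R.map f (R.unit A a) = R.unit B (f a) := by
  have h := Function.surjInv_eq (R.univ A (R.L B) (R.local_L B)).2 (R.unit B ∘ f)
  exact congrFun h a

theorem ReflSub.ext_unique (R : ReflSub.{u}) {A Z : Type u} (hZ : R.IsLocal Z)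
    {h₁ h₂ : R.L A → Z} (h : ∀ a, h₁ (R.unit A a) = h₂ (R.unit A a)) : h₁ = h₂ :=
  (R.univ A Z hZ).1 (funext h)

theorem ReflSub.ext_exists (R : ReflSub.{u}) {A Z : Type u} (hZ : R.IsLocal Z)
    (t : A → Z) : ∃ T : R.L A → Z, ∀ a, T (R.unit A a) = t a := by
  obtain ⟨T, hT⟩ := (R.univ A Z hZ).2 t
  exact ⟨T, fun a => congrFun hT a⟩

private theorem cast_snd {α : Type u} {Q : α → Type u} (σ : Σ a, Q a) (a : α)
    (w : Q a) (e : σ = ⟨a, w⟩) (h : σ.1 = a) : h ▸ σ.2 = w := by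
  subst e; rfl

/-- Modal dependent elimination: a section of a family of local types over
`L W`, prescribed on unit-images, exists. -/
theorem ReflSub.depElim (R : ReflSub.{u}) (hmod : R.IsModality) (W : Type u)
    (Q : R.L W → Type u) (hQ : ∀ w, R.IsLocal (Q w))
    (q : ∀ x : W, Q (R.unit W x)) :
    ∃ S : ∀ w, Q w, ∀ x : W, S (R.unit W x) = q x := by
  have hE : R.IsLocal (Σ w, Q w) := hmod (R.L W) Q (R.local_L W) hQ
  obtain ⟨s, hs⟩ := R.ext_exists hE (fun x : W => (⟨R.unit W x, q x⟩ : Σ w, Q w))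
  have h1 : ∀ w, (s w).1 = w := by
    have := R.ext_unique (A := W) (R.local_L W)
      (h₁ := fun w => (s w).1) (h₂ := fun w => w)
      (fun x => by show (s (R.unit W x)).1 = R.unit W x; rw [hs x])
    exact fun w => congrFun this w
  refine ⟨fun w => (h1 w) ▸ (s w).2, fun x => ?_⟩
  exact cast_snd (s (R.unit W x)) (R.unit W x) (q x) (hs x) (h1 (R.unit W x))

/-- For a modality, every fiber of a unit map has contractible localization. -/
theorem ReflSub.fiber_unit_conn (R : ReflSub.{u}) (hmod : R.IsModality)
    (Y : Type u) (w : R.L Y) :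
    ∃ c : R.L {y : Y // R.unit Y y = w},
      ∀ v : R.L {y : Y // R.unit Y y = w}, v = c := by
  obtain ⟨S, hS⟩ := R.depElim hmod Y (fun w => R.L {y : Y // R.unit Y y = w})
    (fun w => R.local_L _) (fun y => R.unit _ ⟨y, rfl⟩)
  refine ⟨S w, ?_⟩
  intro v
  -- show every element equals S w; enough on generators
  have key : ∀ p : {y : Y // R.unit Y y = w},
      R.unit {y : Y // R.unit Y y = w} p = S w := by
    rintro ⟨y, p⟩
    subst p
    exact (hS y).symm
  have := R.ext_unique (A := {y : Y // R.unit Y y = w}) (R.local_L _)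
    (h₁ := fun v => v) (h₂ := fun _ => S w) (fun p => key p)
  exact congrFun this v

/-- The codomain of the gap map of the naturality square of `g`. -/
def ReflSub.Gap (R : ReflSub.{u}) {X Y : Type u} (g : X → Y) : Type u :=
  {q : Y × R.L X // R.unit Y q.1 = R.map g q.2}

/-- The gap map of the naturality square of `g`. -/
noncomputable def ReflSub.gapMap (R : ReflSub.{u}) {X Y : Type u} (g : X → Y)
    (x : X) : R.Gap g :=
  ⟨(g x, R.unit X x), (R.unit_natural g x).symm⟩

/-- Precomposition with the gap map is injective on maps into local types. -/
theorem ReflSub.gap_epi (R : ReflSub.{u}) (hmod : R.IsModality)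
    {X Y : Type u} (g : X → Y) {Z : Type u} (hZ : R.IsLocal Z)
    (t₁ t₂ : R.Gap g → Z) (h : ∀ x, t₁ (R.gapMap g x) = t₂ (R.gapMap g x)) :
    t₁ = t₂ := by
  -- τ i z := extension of the restriction of t i to the fiber over z,
  -- evaluated at the center of the contractible localization of that fiber.
  have tau : ∀ t : R.Gap g → Z, ∃ τ : R.L X → Z,
      (∀ p : R.Gap g, t p = τ p.1.2) ∧
      (∀ x : X, τ (R.unit X x) = t (R.gapMap g x)) := by
    intro t
    have hext : ∀ z : R.L X,
        ∃ T : R.L {y : Y // R.unit Y y = R.map g z} → Z,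
          ∀ a : {y : Y // R.unit Y y = R.map g z},
            T (R.unit _ a) = t ⟨(a.1, z), a.2⟩ :=
      fun z => R.ext_exists hZ (fun (a : {y : Y // R.unit Y y = R.map g z}) => t ⟨(a.1, z), a.2⟩)
    choose T hT using hext
    choose c hc using fun z => R.fiber_unit_conn hmod Y (R.map g z)
    refine ⟨fun z => T z (c z), ?_, ?_⟩
    · rintro ⟨⟨y, z⟩, hp⟩
      have hcz : R.unit {y : Y // R.unit Y y = R.map g z} ⟨y, hp⟩ = c z := hc z _
      show t ⟨(y, z), hp⟩ = T z (c z)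
      rw [← hcz, hT z ⟨y, hp⟩]
    · intro x
      have hcz : R.unit {y : Y // R.unit Y y = R.map g (R.unit X x)}
          ⟨g x, (R.unit_natural g x).symm⟩ = c (R.unit X x) := hc _ _
      show T (R.unit X x) (c (R.unit X x)) = t (R.gapMap g x)
      rw [← hcz, hT]
      rfl
  obtain ⟨τ₁, hτ₁, hu₁⟩ := tau t₁
  obtain ⟨τ₂, hτ₂, hu₂⟩ := tau t₂
  have : τ₁ = τ₂ := R.ext_unique hZ (fun x => by rw [hu₁, hu₂, h])
  funext p
  rw [hτ₁ p, hτ₂ p, this]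

/-- For a modality, the gap map of the naturality square is an
`L`-equivalence. -/
theorem ReflSub.gap_isEquiv (R : ReflSub.{u}) (hmod : R.IsModality)
    {X Y : Type u} (g : X → Y) : R.IsEquiv (R.gapMap g) := by
  -- key identity: L(gap) ∘ p₂ = η_{Gap}
  have key : (fun p : R.Gap g => R.map (R.gapMap g) p.1.2)
      = R.unit (R.Gap g) := by
    apply R.gap_epi hmod g (R.local_L (R.Gap g))
    intro x
    show R.map (R.gapMap g) (R.unit X x) = _
    rw [R.unit_natural]
  obtain ⟨r, hr⟩ := R.ext_exists (A := R.Gap g) (R.local_L X)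
    (fun p : R.Gap g => p.1.2)
  have left : ∀ a, r (R.map (R.gapMap g) a) = a := by
    have : (fun a => r (R.map (R.gapMap g) a)) = fun a => a := by
      apply R.ext_unique (R.local_L X)
      intro x
      show r (R.map (R.gapMap g) (R.unit X x)) = R.unit X x
      rw [R.unit_natural, hr]
      rfl
    exact fun a => congrFun this a
  have right : ∀ b, R.map (R.gapMap g) (r b) = b := by
    have : (fun b => R.map (R.gapMap g) (r b)) = fun b => b := by
      apply R.ext_unique (R.local_L (R.Gap g))
      intro p
      show R.map (R.gapMap g) (r (R.unit (R.Gap g) p)) = R.unit (R.Gap g) p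
      rw [hr]
      exact congrFun key p
    exact fun b => congrFun this b
  exact Function.bijective_iff_has_inverse.2 ⟨r, left, right⟩

/-- For an `L`-equivalence `f`, precomposition with `f` is injective on maps
into a local type. -/
theorem ReflSub.precomp_inj (R : ReflSub.{u}) {A B Z : Type u} {f : A → B}
    (hf : R.IsEquiv f) (hZ : R.IsLocal Z) {t₁ t₂ : B → Z}
    (h : ∀ a, t₁ (f a) = t₂ (f a)) : t₁ = t₂ := by
  obtain ⟨T₁, hT₁⟩ := R.ext_exists hZ t₁
  obtain ⟨T₂, hT₂⟩ := R.ext_exists hZ t₂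
  have h2 : T₁ ∘ R.map f = T₂ ∘ R.map f := by
    apply R.ext_unique (A := A) hZ
    intro a
    show T₁ (R.map f (R.unit A a)) = T₂ (R.map f (R.unit A a))
    rw [R.unit_natural, hT₁, hT₂, h]
  have hT : T₁ = T₂ := by
    funext b
    obtain ⟨a, rfl⟩ := hf.2 b
    exact congrFun h2 a
  funext b
  rw [← hT₁, ← hT₂, hT]

/-- For an `L`-equivalence `f`, precomposition with `f` is surjective onto maps
into a local type. -/
theorem ReflSub.precomp_surj (R : ReflSub.{u}) {A B Z : Type u} {f : A → B}
    (hf : R.IsEquiv f) (hZ : R.IsLocal Z) (s : A → Z) :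
    ∃ t : B → Z, ∀ a, t (f a) = s a := by
  obtain ⟨S, hS⟩ := R.ext_exists hZ s
  let e := Equiv.ofBijective _ hf
  refine ⟨fun b => S (e.symm (R.unit B b)), fun a => ?_⟩
  show S (e.symm (R.unit B (f a))) = s a
  have : R.unit B (f a) = e (R.unit A a) := (R.unit_natural f a).symm
  rw [this, Equiv.symm_apply_apply, hS]

end Aux

/-- If `L` is a modality, then a map is `L`-étale iff it is right orthogonal
to every `L`-equivalence. -/
theorem stmt_10 (R : ReflSub.{u}) (hmod : R.IsModality)
    (X Y : Type u) (g : X → Y) :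
    R.IsEtale g ↔
      ∀ (A B : Type u) (f : A → B), R.IsEquiv f → LeftOrth f g := by
  constructor
  · -- étale ⇒ right orthogonal to L-equivalences
    intro het A B f hf u v hsq
    obtain ⟨d2, hd2⟩ := R.precomp_surj hf (R.local_L X) (fun a => R.unit X (u a))
    have hcomm : ∀ b, R.unit Y (v b) = R.map g (d2 b) := by
      have : (fun b => R.unit Y (v b)) = fun b => R.map g (d2 b) := by
        apply R.precomp_inj hf (R.local_L Y)
        intro a
        show R.unit Y (v (f a)) = R.map g (d2 (f a))
        rw [hd2, R.unit_natural]
        exact congrArg (R.unit Y) (congrFun hsq a).symm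
      exact fun b => congrFun this b
    have hex : ∀ b, ∃! x : X, g x = v b ∧ R.unit X x = d2 b :=
      fun b => het.2 (v b) (d2 b) (hcomm b)
    classical
    let d : B → X := fun b => (hex b).exists.choose
    have hd : ∀ b, g (d b) = v b ∧ R.unit X (d b) = d2 b :=
      fun b => (hex b).exists.choose_spec
    refine ⟨d, ⟨funext fun a => ?_, funext fun b => (hd b).1⟩, ?_⟩
    · -- d ∘ f = u
      exact (hex (f a)).unique (hd (f a))
        ⟨congrFun hsq a, (hd2 a).symm⟩
    · -- uniqueness of the filler
      rintro d' ⟨hd'1, hd'2⟩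
      have hη : ∀ b, R.unit X (d' b) = d2 b := by
        have : (fun b => R.unit X (d' b)) = d2 := by
          apply R.precomp_inj hf (R.local_L X)
          intro a
          show R.unit X (d' (f a)) = d2 (f a)
          have hda : d' (f a) = u a := congrFun hd'1 a
          rw [hda, hd2]
        exact fun b => congrFun this b
      funext b
      exact (hex b).unique ⟨congrFun hd'2 b, hη b⟩ (hd b)
  · -- right orthogonal to L-equivalences ⇒ étale
    intro horth
    constructor
    · exact fun x => (R.unit_natural g x).symm
    · intro y z hyz
      have hε := R.gap_isEquiv hmod g
      obtain ⟨d, ⟨hdc, hgd⟩, -⟩ := horth X (R.Gap g) (R.gapMap g) hε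
        id (fun p => p.1.1) rfl
      have hη : ∀ p : R.Gap g, R.unit X (d p) = p.1.2 := by
        have : (fun p : R.Gap g => R.unit X (d p)) = fun p => p.1.2 := by
          apply R.precomp_inj hε (R.local_L X)
          intro x
          show R.unit X (d (R.gapMap g x)) = (R.gapMap g x).1.2
          have hdx : d (R.gapMap g x) = x := congrFun hdc x
          rw [hdx]
          rfl
        exact fun p => congrFun this p
      set p : R.Gap g := ⟨(y, z), hyz⟩ with hp
      refine ⟨d p, ⟨congrFun hgd p, hη p⟩, ?_⟩
      rintro x' ⟨h1, h2⟩
      have hgx : R.gapMap g x' = p := by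
        apply Subtype.ext
        show (g x', R.unit X x') = (y, z)
        rw [h1, h2]
      calc x' = d (R.gapMap g x') := (congrFun hdc x').symm
        _ = d p := by rw [hgx]
end

section
/- Let L be the nullification at a family of types {B_i}, i.e., the reflective subuniverse presented by the maps f_i : B_i → 1 to the one-point type. Then a map g : X → Y is right orthogonal to every map f_i if and only if g is L-local. -/
universe u

/-- If `L` is the nullification at a family of types `B i` (i.e. presented by
the maps `f i : B i → 1`), then a map `g` is right orthogonal to every `f i`
iff `g` is `L`-local. -/
theorem stmt_11 (R : ReflSub.{u}) (I : Type u) (B : I → Type u)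
    (hnull : ∀ X : Type u, R.IsLocal X ↔
      ∀ i, Function.Bijective (fun (x : X) (_ : B i) => x))
    (X Y : Type u) (g : X → Y) :
    (∀ i, LeftOrth (fun _ : B i => PUnit.unit.{u + 1}) g) ↔
      R.IsLocalMap g := by
  constructor
  · intro horth y
    rw [hnull]
    intro i
    constructor
    · rintro ⟨x₁, hx₁⟩ ⟨x₂, hx₂⟩ h
      have hvals : (fun _ : B i => x₁) = fun _ : B i => x₂ := by
        funext b
        exact congrArg Subtype.val (congrFun h b)
      obtain ⟨d, hd, hu⟩ := horth i (fun _ : B i => x₁) (fun _ => y)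
        (by funext b; exact hx₁)
      have e₁ : d = fun _ => x₁ := (hu (fun _ => x₁)
        ⟨rfl, by funext _; exact hx₁⟩).symm
      have e₂ : d = fun _ => x₂ := (hu (fun _ => x₂)
        ⟨hvals.symm, by funext _; exact hx₂⟩).symm
      have : x₁ = x₂ := by
        have := congrFun (e₁.symm.trans e₂) PUnit.unit
        exact this
      exact Subtype.ext this
    · intro h
      obtain ⟨d, ⟨hdf, hgd⟩, _⟩ := horth i (fun b => (h b).1) (fun _ => y)
        (by funext b; exact (h b).2)
      refine ⟨⟨d PUnit.unit, congrFun hgd PUnit.unit⟩, ?_⟩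
      funext b
      exact Subtype.ext (congrFun hdf b)
  · intro hloc i u v huv
    set y := v PUnit.unit with hy
    have hbij := (hnull _).mp (hloc y) i
    set F := {x : X // g x = y}
    have hu : ∀ b, g (u b) = y := fun b => congrFun huv b
    obtain ⟨x, hx⟩ := hbij.2 (fun b => (⟨u b, hu b⟩ : F))
    refine ⟨fun _ => x.1, ⟨?_, ?_⟩, ?_⟩
    · funext b
      exact (congrArg Subtype.val (congrFun hx b)).symm ▸ rfl
    · funext p
      cases p
      exact x.2
    · intro d ⟨hdf, hgd⟩
      have hd : (fun (_ : B i) => (⟨d PUnit.unit, congrFun hgd PUnit.unit⟩ : F))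
          = fun b => (⟨u b, hu b⟩ : F) := by
        funext b
        exact Subtype.ext (congrFun hdf b)
      have := hbij.1 (hd.trans hx.symm)
      funext p
      cases p
      exact congrArg Subtype.val this
end

section
/- Let L be the nullification at a family of types {B_i}. Then a map g : X → Y is right orthogonal to every unit map η_A : A → L A if and only if g is L-local. -/
universe u

/-- If `L` is the nullification at a family of types `B i`, then a map `g` is
right orthogonal to every unit `η_A : A → L A` iff `g` is `L`-local. -/
theorem stmt_12 (R : ReflSub.{u}) (I : Type u) (B : I → Type u)
    (hnull : ∀ X : Type u, R.IsLocal X ↔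
      ∀ i, Function.Bijective (fun (x : X) (_ : B i) => x))
    (X Y : Type u) (g : X → Y) :
    (∀ A : Type u, LeftOrth (R.unit A) g) ↔ R.IsLocalMap g := by
  classical
  constructor
  · -- orthogonality ⇒ local map
    intro h y
    set F := {x : X // g x = y} with hF
    obtain ⟨d, ⟨hd1, hd2⟩, -⟩ :=
      h F (fun a => a.1) (fun _ => y) (by funext a; exact a.2)
    have hr : ∀ z, g (d z) = y := fun z => congrFun hd2 z
    set r : R.L F → F := fun z => ⟨d z, hr z⟩ with hrdef
    have hrs : ∀ a : F, r (R.unit F a) = a := by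
      intro a
      apply Subtype.ext
      exact congrFun hd1 a
    rw [hnull]
    intro i
    have hL := (hnull (R.L F)).1 (R.local_L F) i
    constructor
    · intro x₁ x₂ hx
      have h1 : (fun _ : B i => R.unit F x₁) = (fun _ : B i => R.unit F x₂) := by
        exact congrArg (fun φ => (R.unit F) ∘ φ) hx
      have h2 : R.unit F x₁ = R.unit F x₂ := hL.1 h1
      have h3 := congrArg r h2
      rw [hrs, hrs] at h3
      exact h3
    · intro φ
      obtain ⟨z, hz⟩ := hL.2 (fun b => R.unit F (φ b))
      refine ⟨r z, ?_⟩
      funext b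
      have hzb : z = R.unit F (φ b) := congrFun hz b
      calc r z = r (R.unit F (φ b)) := by rw [hzb]
        _ = φ b := hrs (φ b)
  · -- local map ⇒ orthogonality
    intro hloc A u v hsq
    -- the pullback of g along v
    set C := {p : R.L A × X // v p.1 = g p.2} with hCdef
    -- C is local
    have hC : R.IsLocal C := by
      rw [hnull]
      intro i
      have hLA := (hnull (R.L A)).1 (R.local_L A) i
      constructor
      · intro c₁ c₂ hc
        have h1 : (fun _ : B i => c₁.1.1) = (fun _ : B i => c₂.1.1) :=
          congrArg (fun φ => (fun c : C => c.1.1) ∘ φ) hc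
        have hz : c₁.1.1 = c₂.1.1 := hLA.1 h1
        -- use locality of the fiber over v c₁.1.1
        set Fz := {x : X // g x = v c₁.1.1} with hFz
        have hFzl := (hnull Fz).1 (hloc (v c₁.1.1)) i
        set m : C → Fz := fun c =>
          if hcz : c.1.1 = c₁.1.1 then ⟨c.1.2, by rw [← c.2, hcz]⟩
          else ⟨c₁.1.2, c₁.2.symm⟩ with hmdef
        have h2 : (fun _ : B i => m c₁) = (fun _ : B i => m c₂) :=
          congrArg (fun φ => m ∘ φ) hc
        have h3 : m c₁ = m c₂ := hFzl.1 h2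
        have hm1 : (m c₁).1 = c₁.1.2 := by simp [hmdef]
        have hm2 : (m c₂).1 = c₂.1.2 := by simp [hmdef, hz]
        have hx : c₁.1.2 = c₂.1.2 := by rw [← hm1, ← hm2, h3]
        apply Subtype.ext
        exact Prod.ext hz hx
      · intro φ
        obtain ⟨z, hz⟩ := hLA.2 (fun b => (φ b).1.1)
        have hzb : ∀ b, (φ b).1.1 = z := fun b => (congrFun hz b).symm
        set ψ : B i → {x : X // g x = v z} := fun b =>
          ⟨(φ b).1.2, by rw [← (φ b).2, hzb b]⟩ with hψ
        obtain ⟨x, hx⟩ := ((hnull _).1 (hloc (v z)) i).2 ψ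
        refine ⟨⟨(z, x.1), x.2.symm⟩, ?_⟩
        funext b
        have hxb : x = ψ b := congrFun hx b
        apply Subtype.ext
        apply Prod.ext
        · exact (hzb b).symm
        · show x.1 = (φ b).1.2
          rw [hxb]
    -- uniqueness of fillers
    have huniq : ∀ d₁ d₂ : R.L A → X,
        (d₁ ∘ R.unit A = u ∧ g ∘ d₁ = v) →
        (d₂ ∘ R.unit A = u ∧ g ∘ d₂ = v) → d₁ = d₂ := by
      intro d₁ d₂ ⟨h11, h12⟩ ⟨h21, h22⟩
      set K₁ : R.L A → C := fun z => ⟨(z, d₁ z), (congrFun h12 z).symm⟩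
      set K₂ : R.L A → C := fun z => ⟨(z, d₂ z), (congrFun h22 z).symm⟩
      have hK : K₁ = K₂ := by
        apply (R.univ A C hC).1
        funext a
        apply Subtype.ext
        show ((R.unit A a, d₁ (R.unit A a)) : R.L A × X)
          = (R.unit A a, d₂ (R.unit A a))
        have e1 : d₁ (R.unit A a) = u a := congrFun h11 a
        have e2 : d₂ (R.unit A a) = u a := congrFun h21 a
        rw [e1, e2]
      funext z
      exact congrArg (fun c : C => c.1.2) (congrFun hK z)
    -- existence
    set k : A → C := fun a => ⟨(R.unit A a, u a), (congrFun hsq a).symm⟩ with hk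
    obtain ⟨K, hK⟩ := (R.univ A C hC).2 k
    have hKη : ∀ a, K (R.unit A a) = k a := fun a => congrFun hK a
    have hp : (fun z => (K z).1.1) = id := by
      apply (R.univ A (R.L A) (R.local_L A)).1
      funext a
      show (K (R.unit A a)).1.1 = R.unit A a
      rw [hKη a]
    have hpz : ∀ z, (K z).1.1 = z := fun z => congrFun hp z
    refine ⟨fun z => (K z).1.2, ⟨?_, ?_⟩, ?_⟩
    · funext a
      show (K (R.unit A a)).1.2 = u a
      rw [hKη a]
    · funext z
      show g (K z).1.2 = v z
      rw [← (K z).2, hpz z]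
    · intro d' hd'
      refine huniq d' _ hd' ⟨?_, ?_⟩
      · funext a
        show (K (R.unit A a)).1.2 = u a
        rw [hKη a]
      · funext z
        show g (K z).1.2 = v z
        rw [← (K z).2, hpz z]
end
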